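/- Protocol 2 is a (⌈(n'-1)/2⌉, q^{-ℓ})-cheater-identifiable secret sharing scheme for agreed identification realizing access structure 𝔸, with share space F_q^{(2n-1)ℓ + 2m - 1}: if the number t of cheaters satisfies t < ⌈(n'-1)/2⌉ and the honest players form a qualified set, then all honest players agree on the identification of each forging cheater, each forging cheater is identified except with probability at most q^{-ℓ}, and the players agreeably reconstruct the true secret. -/

import Mathlib

open Finset
open scoped ENNReal
open scoped Classical

/-- The `n × m` Toeplitz matrix over `F` determined by the vector
`s ∈ F^(n+m-1)` giving its first column (bottom to top: `T (n-1) 0 = s 0`, ..., `T 0 0 = s (n-1)`)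
and first row (`T 0 j = s (n-1+j)`); it satisfies `T i j = T (i-1) (j-1)`. -/
def toeplitz {F : Type*} (n m : ℕ) (s : Fin (n + m - 1) → F) :
    Matrix (Fin n) (Fin m) F :=
  fun i j => s ⟨n - 1 - i.1 + j.1, by have h1 := i.2; have h2 := j.2; omega⟩


private lemma key0 {F : Type*} [Field F] (m : ℕ) (v : ℕ → F) (hv0 : v 0 ≠ 0) (hm : 1 ≤ m)
    (ℓ : ℕ) (y : ℕ → F) :
    ∃ s : ℕ → F, ∀ i < ℓ, ∑ j ∈ Finset.range m, s (ℓ - 1 - i + j) * v j = y i := by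
  induction ℓ with
  | zero => exact ⟨fun _ => 0, fun i hi => absurd hi (by omega)⟩
  | succ ℓ ih =>
    obtain ⟨s', hs'⟩ := ih
    obtain ⟨m', rfl⟩ : ∃ m', m = m' + 1 := ⟨m - 1, by omega⟩
    refine ⟨fun k => if k = 0 then (y ℓ - ∑ j ∈ Finset.range m', s' j * v (j + 1)) / v 0
      else s' (k - 1), fun i hi => ?_⟩
    rcases Nat.lt_or_ge i ℓ with hlt | hge
    · have hcg : ∀ j ∈ Finset.range (m' + 1),
          (if ℓ + 1 - 1 - i + j = 0
            then (y ℓ - ∑ j ∈ Finset.range m', s' j * v (j + 1)) / v 0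
            else s' (ℓ + 1 - 1 - i + j - 1)) * v j
            = s' (ℓ - 1 - i + j) * v j := by
        intro j hj
        rw [if_neg (by omega)]
        congr 2
        omega
      rw [Finset.sum_congr rfl hcg]
      exact hs' i hlt
    · have hi' : i = ℓ := by omega
      subst hi'
      have hidx : ∀ j : ℕ, i + 1 - 1 - i + j = j := fun j => by omega
      simp only [hidx]
      rw [Finset.sum_range_succ']
      have h1 : ∀ j ∈ Finset.range m',
          (if j + 1 = 0
            then (y i - ∑ j ∈ Finset.range m', s' j * v (j + 1)) / v 0
            else s' (j + 1 - 1)) * v (j + 1) = s' j * v (j + 1) := by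
        intro j hj; rw [if_neg (by omega)]; norm_num
      rw [Finset.sum_congr rfl h1, if_pos rfl]
      field_simp
      ring

private lemma key {F : Type*} [Field F] (m : ℕ) (v : ℕ → F) (j0 : ℕ) (hv0 : v j0 ≠ 0)
    (hj0 : j0 < m) (hlow : ∀ j < j0, v j = 0) (ℓ : ℕ) (y : ℕ → F) :
    ∃ s : ℕ → F, ∀ i < ℓ, ∑ j ∈ Finset.range m, s (ℓ - 1 - i + j) * v j = y i := by
  obtain ⟨s', hs'⟩ := key0 (m - j0) (fun j => v (j + j0)) (by simpa using hv0) (by omega) ℓ y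
  refine ⟨fun k => if j0 ≤ k then s' (k - j0) else 0, fun i hi => ?_⟩
  rw [show m = j0 + (m - j0) by omega, Finset.sum_range_add]
  have h0 : ∑ j ∈ Finset.range j0,
      (if j0 ≤ ℓ - 1 - i + j then s' (ℓ - 1 - i + j - j0) else 0) * v j = 0 := by
    apply Finset.sum_eq_zero
    intro j hj
    rw [hlow j (Finset.mem_range.mp hj), mul_zero]
  rw [h0, zero_add]
  have h1 : ∀ j ∈ Finset.range (m - j0),
      (if j0 ≤ ℓ - 1 - i + (j0 + j) then s' (ℓ - 1 - i + (j0 + j) - j0) else 0) * v (j0 + j)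
        = s' (ℓ - 1 - i + j) * v (j + j0) := by
    intro j hj
    rw [if_pos (by omega)]
    congr 2 <;> omega
  rw [Finset.sum_congr rfl h1]
  exact hs' i hi

private lemma fiber_card {α β : Type*} [AddCommGroup α] [AddCommGroup β] [Fintype α]
    [Fintype β] (f : α →+ β) (hf : Function.Surjective f) (c : β)
    [DecidablePred (fun a => f a = c)] :
    (Finset.univ.filter (fun a => f a = c)).card * Fintype.card β = Fintype.card α := by
  have h := Finset.card_eq_sum_card_fiberwise
    (s := (Finset.univ : Finset α)) (t := Finset.univ) (f := f) (fun a _ => mem_univ _)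
  have hK : ∀ b : β, (Finset.univ.filter (fun a => f a = b)).card
      = (Finset.univ.filter (fun a => f a = c)).card := by
    intro b
    obtain ⟨ab, hab⟩ := hf b
    obtain ⟨ac, hac⟩ := hf c
    apply Finset.card_bij' (i := fun a _ => a - ab + ac) (j := fun a _ => a - ac + ab)
    · intro a ha
      simp only [mem_filter, mem_univ, true_and] at ha ⊢
      simp [map_add, map_sub, ha, hab, hac]
    · intro a ha
      simp only [mem_filter, mem_univ, true_and] at ha ⊢
      simp [map_add, map_sub, ha, hab, hac]
    · intro a ha; abel
    · intro a ha; abel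
  rw [Finset.sum_congr rfl (fun b _ => hK b), Finset.sum_const, smul_eq_mul,
    Finset.card_univ, Finset.card_univ] at h
  rw [h, mul_comm]

/-- Protocol 2 is a `(⌈(n'-1)/2⌉, q^{-ℓ})`-CISS scheme for agreed identification realizing
access structure `Acc` with share space `F^((2n-1)ℓ + 2m - 1)`: when the number of cheaters
is less than `⌈(n'-1)/2⌉` and the honest players `H` form a qualified set, (i) the share
space has the stated size, (ii) each forging cheater escapes any honest player's individual
verification with probability at most `q^{-ℓ}`, and (iii) whenever all honest players'
individual lists equal the true set `Cstar` of forging cheaters, the majority vote agrees on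
exactly `Cstar` and the players agreeably reconstruct the true secret `S`. -/
theorem stmt13 (F : Type*) [Field F] [Fintype F] (n m ℓ : ℕ) (hn : 1 ≤ n) (hm : 1 ≤ m)
    (Secret : Type*) (S : Secret)
    (Acc : Finset (Fin n) → Prop)
    (hmono : ∀ Q Q' : Finset (Fin n), Q ⊆ Q' → Acc Q → Acc Q')
    (P H : Finset (Fin n)) (hHP : H ⊆ P) (hH : Acc H)
    (n' : ℕ) (hn' : n' = P.card)
    (hmaj : (((P \ H).card : ℤ)) < ⌈((n' : ℚ) - 1) / 2⌉)
    (x : Fin n → Fin m → F) (z : Fin n → Fin n → Fin ℓ → F)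
    (sub : Fin n → (Fin m → F) × (Fin n → Fin ℓ → F))
    (hsub : ∀ i ∈ H, sub i = (x i, fun j => z j i))
    (Cstar : Finset (Fin n))
    (hCstar : Cstar = P.filter (fun i => sub i ≠ (x i, fun j => z j i)))
    (Rc : Finset (Fin n) → (Fin n → Fin m → F) → Secret)
    (hRc : ∀ Q, Acc Q → ∀ g : Fin n → Fin m → F, (∀ i ∈ Q, g i = x i) → Rc Q g = S) :
    Fintype.card ((Fin m → F) × (Fin (n - 1) → Fin ℓ → F) ×
        (Fin (ℓ + m - 1) → F) × (Fin (n - 1) → Fin ℓ → F))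
      = Fintype.card F ^ ((2 * n - 1) * ℓ + 2 * m - 1)
    ∧
    (∀ i ∈ P, (sub i).1 ≠ x i → ∀ j ∈ H,
      ((Finset.univ.filter (fun s : Fin (ℓ + m - 1) → F =>
          (toeplitz ℓ m s).mulVec (x i) + z j i =
            (toeplitz ℓ m s).mulVec (sub i).1 + (sub i).2 j)).card : ℝ) /
        (Fintype.card F : ℝ) ^ (ℓ + m - 1) ≤ 1 / (Fintype.card F : ℝ) ^ ℓ)
    ∧
    (∀ k : Fin n → Fin (ℓ + m - 1) → F,
      letI L : Fin n → Finset (Fin n) := fun j =>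
        P.filter (fun i => ¬ ((toeplitz ℓ m (k j)).mulVec (x i) + z j i =
          (toeplitz ℓ m (k j)).mulVec (sub i).1 + (sub i).2 j))
      (∀ j ∈ H, L j = Cstar) →
        ((∀ T : Finset (Fin n),
            (⌈((n' : ℚ) - 1) / 2⌉ : ℤ) ≤ ((P.filter (fun j => L j = T)).card : ℤ) → T = Cstar)
          ∧ (⌈((n' : ℚ) - 1) / 2⌉ : ℤ) ≤ ((P.filter (fun j => L j = Cstar)).card : ℤ)
          ∧ Rc (P \ Cstar) (fun i => (sub i).1) = S)) := by
  -- arithmetic facts about the ceiling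
  have h2c : 2 * ⌈((n' : ℚ) - 1) / 2⌉ ≤ (n' : ℤ) := by
    have h := Int.ceil_lt_add_one (((n' : ℚ) - 1) / 2)
    have h2 : (2 * ⌈((n' : ℚ) - 1) / 2⌉ : ℤ) < (n' : ℤ) + 1 := by
      exact_mod_cast (by push_cast; linarith :
        ((2 * ⌈((n' : ℚ) - 1) / 2⌉ : ℤ) : ℚ) < ((n' : ℤ) : ℚ) + 1)
    omega
  have hPH : ((P \ H).card : ℤ) + (H.card : ℤ) = (P.card : ℤ) := by
    exact_mod_cast Finset.card_sdiff_add_card_eq_card hHP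
  have hn'' : (n' : ℤ) = (P.card : ℤ) := by exact_mod_cast hn'
  refine ⟨?_, ?_, ?_⟩
  · -- cardinality of the share space
    rw [Fintype.card_prod, Fintype.card_prod, Fintype.card_prod, Fintype.card_fun,
      Fintype.card_fun, Fintype.card_fun, Fintype.card_fun,
      Fintype.card_fin, Fintype.card_fin, Fintype.card_fin, Fintype.card_fin,
      ← pow_mul, ← pow_add, ← pow_add, ← pow_add]
    congr 1
    zify [show 1 ≤ ℓ + m from by omega, show 1 ≤ 2 * n from by omega, hn,
      show 1 ≤ (2 * n - 1) * ℓ + 2 * m from by omega]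
    ring
  · -- probability bound
    intro i hiP hforge j hjH
    set v : Fin m → F := x i - (sub i).1 with hv_def
    have hv : v ≠ 0 := by
      intro h
      have h' : x i - (sub i).1 = 0 := hv_def ▸ h
      exact hforge (sub_eq_zero.mp h').symm
    set vnat : ℕ → F := fun jn => if h : jn < m then v ⟨jn, h⟩ else 0 with hvnat
    have hex : ∃ jn, vnat jn ≠ 0 := by
      obtain ⟨r, hr⟩ := Function.ne_iff.mp hv
      refine ⟨r.1, ?_⟩
      simpa [hvnat, dif_pos r.2] using hr
    set j0 := Nat.find hex with hj0def
    have hj0spec : vnat j0 ≠ 0 := Nat.find_spec hex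
    have hj0m : j0 < m := by
      by_contra h
      exact hj0spec (by simp [hvnat, dif_neg (by omega : ¬ j0 < m)])
    have hlow : ∀ jn < j0, vnat jn = 0 := by
      intro jn hjn
      by_contra h
      exact Nat.find_min hex hjn h
    -- the additive map s ↦ T(s) ⬝ v
    set f : (Fin (ℓ + m - 1) → F) →+ (Fin ℓ → F) :=
      { toFun := fun s => (toeplitz ℓ m s).mulVec v
        map_zero' := by
          funext r
          simp [toeplitz, Matrix.mulVec, dotProduct]
        map_add' := by
          intro s t
          funext r
          simp [toeplitz, Matrix.mulVec, dotProduct, add_mul,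
            Finset.sum_add_distrib] } with hf_def
    have hsurj : Function.Surjective f := by
      intro y
      obtain ⟨snat, hs⟩ := key m vnat j0 hj0spec hj0m hlow ℓ
        (fun rn => if h : rn < ℓ then y ⟨rn, h⟩ else 0)
      refine ⟨fun k => snat k.1, funext fun r => ?_⟩
      have hrow := hs r.1 r.2
      rw [dif_pos r.2] at hrow
      calc f (fun k => snat k.1) r
          = ∑ jn ∈ Finset.range m, snat (ℓ - 1 - r.1 + jn) * vnat jn := by
            rw [← Fin.sum_univ_eq_sum_range (fun jn => snat (ℓ - 1 - r.1 + jn) * vnat jn) m]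
            show ∑ j : Fin m, toeplitz ℓ m (fun k => snat k.1) r j * v j = _
            refine Finset.sum_congr rfl fun j _ => ?_
            show snat (ℓ - 1 - r.1 + j.1) * v j = _
            rw [hvnat]
            simp only [dif_pos j.2]
        _ = y r := by rw [hrow]
    have hcard := fiber_card f hsurj ((sub i).2 j - z j i)
    rw [Fintype.card_fun, Fintype.card_fun, Fintype.card_fin, Fintype.card_fin] at hcard
    have hfilter : (Finset.univ.filter (fun s : Fin (ℓ + m - 1) → F =>
        (toeplitz ℓ m s).mulVec (x i) + z j i =
          (toeplitz ℓ m s).mulVec (sub i).1 + (sub i).2 j))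
        = Finset.univ.filter (fun s => f s = (sub i).2 j - z j i) := by
      apply Finset.filter_congr
      intro s _
      show _ ↔ (toeplitz ℓ m s).mulVec v = _
      rw [hv_def, Matrix.mulVec_sub, sub_eq_sub_iff_add_eq_add, add_comm ((sub i).2 j)]
    rw [hfilter]
    have hq : (0 : ℝ) < (Fintype.card F : ℝ) := by exact_mod_cast Fintype.card_pos
    rw [div_le_div_iff₀ (by positivity) (by positivity), one_mul]
    have : ((Finset.univ.filter (fun s => f s = (sub i).2 j - z j i)).card : ℝ) *
        (Fintype.card F : ℝ) ^ ℓ = (Fintype.card F : ℝ) ^ (ℓ + m - 1) := by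
      exact_mod_cast hcard
    linarith
  · -- identification and reconstruction
    intro k hL
    generalize hLfun : (fun j : Fin n => P.filter
      (fun i => ¬ ((toeplitz ℓ m (k j)).mulVec (x i) + z j i =
        (toeplitz ℓ m (k j)).mulVec (sub i).1 + (sub i).2 j))) = L at hL ⊢
    have hHsub : H ⊆ P.filter (fun j => L j = Cstar) :=
      fun j hj => Finset.mem_filter.mpr ⟨hHP hj, hL j hj⟩
    have hHcard : (H.card : ℤ) ≤ ((P.filter (fun j => L j = Cstar)).card : ℤ) := by
      exact_mod_cast Finset.card_le_card hHsub
    refine ⟨?_, by omega, ?_⟩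
    · intro T hT
      set A := P.filter (fun j => L j = T) with hA
      have hAP : A ⊆ P := Finset.filter_subset _ _
      have hUnion : ((A ∪ H).card : ℤ) ≤ (P.card : ℤ) := by
        exact_mod_cast Finset.card_le_card (Finset.union_subset hAP hHP)
      have hUI : ((A ∪ H).card : ℤ) + ((A ∩ H).card : ℤ) = (A.card : ℤ) + (H.card : ℤ) := by
        exact_mod_cast Finset.card_union_add_card_inter A H
      have hpos : 0 < (A ∩ H).card := by
        have : (0 : ℤ) < ((A ∩ H).card : ℤ) := by omega
        exact_mod_cast this
      obtain ⟨a, ha⟩ := Finset.card_pos.mp hpos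
      have haA := (Finset.mem_inter.mp ha).1
      have haH := (Finset.mem_inter.mp ha).2
      have h1 : L a = T := (Finset.mem_filter.mp haA).2
      have h2 : L a = Cstar := hL a haH
      rw [← h1, h2]
    · have hHC : H ⊆ P \ Cstar := by
        intro a ha
        refine Finset.mem_sdiff.mpr ⟨hHP ha, ?_⟩
        rw [hCstar]
        simp only [Finset.mem_filter, not_and, not_not]
        intro _
        exact hsub a ha
      refine hRc _ (hmono H _ hHC hH) _ (fun a ha => ?_)
      obtain ⟨haP, haC⟩ := Finset.mem_sdiff.mp ha
      rw [hCstar] at haC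
      simp only [Finset.mem_filter, not_and, not_not] at haC
      exact congrArg Prod.fst (haC haP)
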